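/- Let (P,s,v) be a β-signed differential poset and for k, n ≥ 0 set τ_{k,n} = ∑_{x ∈ P_n} v(x)·⟨D^k 𝐏_{n+k}, x⟩, where 𝐏_m = ∑_{y ∈ P_m} y (and τ_{k,n} = 0 for n < 0). Then for all integers l ≥ 0 and n ≥ 0: ∑_{j=0}^{l} binom(l,j)·τ_{2l, n−2j} = 2^l · ∑_{x ∈ P_n} v(x). Equivalently, with G(P,t) = ∑_{x∈P} v(x) t^{ρ(x)} and G_{2l}(P,t) = ∑_{n≥0} τ_{2l,n} t^n as formal power series, (1+t²)^l · G_{2l}(P,t) = 2^l · G(P,t). -/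
import Mathlib


open scoped Classical

namespace SDP

variable {P : Type*} [PartialOrder P] [OrderBot P]

/-- The sign of a saturated chain, recorded as a list: the product of the
edge signs `s` over consecutive pairs. -/
def chainSign {α : Type*} (s : α → α → ℤ) : List α → ℤ
  | [] => 1
  | [_] => 1
  | x :: y :: rest => s x y * chainSign s (y :: rest)

/-- Maximal chains from `⊥` to `x`: lists whose consecutive entries are covers,
starting at `⊥` and ending at `x`. -/
def chainsTo (x : P) : Set (List P) :=
  {l : List P | l.Chain' (· ⋖ ·) ∧ l.head? = some (⊥ : P) ∧ l.getLast? = some x}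

/-- `e(x)`: the signed sum of maximal chains from `⊥` to `x`. -/
noncomputable def e (s : P → P → ℤ) (x : P) : ℤ :=
  ∑ᶠ l ∈ chainsTo x, chainSign s l

variable (K : Type*) [Field K]

/-- The up operator on `K̂P`, written coefficientwise:
`(U f)(y) = ∑_{x ⋖ y} s(x ⋖ y) f(x)`. -/
noncomputable def Uop (s : P → P → ℤ) (f : P → K) : P → K :=
  fun y => ∑ᶠ x ∈ {x : P | x ⋖ y}, (s x y : K) * f x

/-- The down operator on `K̂P`, written coefficientwise:
`(D f)(x) = ∑_{y ⋗ x} s(x ⋖ y) v(y) v(x) f(y)`. -/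
noncomputable def Dop (s : P → P → ℤ) (v : P → ℤ) (f : P → K) : P → K :=
  fun x => ∑ᶠ y ∈ {y : P | x ⋖ y}, (s x y : K) * (v y : K) * (v x : K) * f y

variable [GradeMinOrder ℕ P]

/-- `(P, s, v)` is a signed poset: edge labels and vertex labels are signs, and
each rank of the graded poset `P` is finite. -/
def IsSignedPoset (s : P → P → ℤ) (v : P → ℤ) : Prop :=
  (∀ x y : P, x ⋖ y → s x y = 1 ∨ s x y = -1) ∧
  (∀ x : P, v x = 1 ∨ v x = -1) ∧
  (∀ n : ℕ, {x : P | grade ℕ x = n}.Finite)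

/-- Weakly signed differential: `v(0̂) = 1` and `UD + DU = I` on `K̂P`. -/
def WeaklySignedDifferential (s : P → P → ℤ) (v : P → ℤ) : Prop :=
  v ⊥ = 1 ∧ ∀ f : P → K, Uop K s (Dop K s v f) + Dop K s v (Uop K s f) = f

/-- α-signed differential: weakly signed differential and `(U + D)𝐏 = 𝐏`. -/
def AlphaSignedDifferential (s : P → P → ℤ) (v : P → ℤ) : Prop :=
  WeaklySignedDifferential K s v ∧
    Uop K s (fun _ => 1) + Dop K s v (fun _ => 1) = (fun _ => (1 : K))

/-- β-signed differential: weakly signed differential and `(D - U)𝐏 = 𝐏`. -/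
def BetaSignedDifferential (s : P → P → ℤ) (v : P → ℤ) : Prop :=
  WeaklySignedDifferential K s v ∧
    Dop K s v (fun _ => 1) - Uop K s (fun _ => 1) = (fun _ => (1 : K))

end SDP

namespace SDP

variable {P : Type*} [PartialOrder P] [OrderBot P] (K : Type*) [Field K]
variable [GradeMinOrder ℕ P]

/-- `𝐏ₘ = ∑_{y ∈ Pₘ} y`, the indicator vector of the `m`-th rank (empty for `m < 0`). -/
noncomputable def rankIndicator (m : ℤ) : P → K :=
  fun p => if (grade ℕ p : ℤ) = m then 1 else 0

/-- `τ_{k,n} = ∑_{x ∈ Pₙ} v(x) ⟨Dᵏ 𝐏_{n+k}, x⟩` (zero for `n < 0`). -/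
noncomputable def tau (s : P → P → ℤ) (v : P → ℤ) (k : ℕ) (n : ℤ) : K :=
  ∑ᶠ x ∈ {x : P | (grade ℕ x : ℤ) = n},
    (v x : K) * ((Dop K s v)^[k] (rankIndicator K (n + k))) x

end SDP

set_option linter.unusedSectionVars false
set_option linter.unusedVariables false

namespace SDP9
open SDP Finset

variable {P : Type*} [PartialOrder P] [OrderBot P] [GradeMinOrder ℕ P]

lemma grade_covby {x y : P} (h : x ⋖ y) : grade ℕ y = grade ℕ x + 1 :=
  ((Order.covBy_iff_add_one_eq).mp (h.grade ℕ)).symm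

variable (K : Type*) [Field K] (s : P → P → ℤ) (v : P → ℤ)
variable (hfin : ∀ n : ℕ, {x : P | grade ℕ x = n}.Finite)
include hfin

lemma finite_rankZ (m : ℤ) : {x : P | (grade ℕ x : ℤ) = m}.Finite :=
  (hfin m.toNat).subset (fun x hx => by simp only [Set.mem_setOf_eq] at *; omega)

noncomputable def F (m : ℤ) : Finset P := (finite_rankZ hfin m).toFinset

lemma mem_F {x : P} {m : ℤ} : x ∈ F hfin m ↔ (grade ℕ x : ℤ) = m := by
  simp [F, Set.Finite.mem_toFinset]

lemma finite_up (x : P) : {y : P | x ⋖ y}.Finite :=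
  (hfin (grade ℕ x + 1)).subset (fun y hy => grade_covby hy)

lemma finite_down (x : P) : {z : P | z ⋖ x}.Finite :=
  (finite_rankZ hfin ((grade ℕ x : ℤ) - 1)).subset (fun z hz => by
    have := grade_covby (Set.mem_setOf_eq ▸ hz)
    simp only [Set.mem_setOf_eq]
    omega)

noncomputable def Cu (x : P) : Finset P := (finite_up hfin x).toFinset
noncomputable def Cd (x : P) : Finset P := (finite_down hfin x).toFinset

lemma mem_Cu {x y : P} : y ∈ Cu hfin x ↔ x ⋖ y := by simp [Cu]
lemma mem_Cd {x z : P} : z ∈ Cd hfin x ↔ z ⋖ x := by simp [Cd]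

lemma Dop_apply (f : P → K) (x : P) :
    Dop K s v f x = ∑ y ∈ Cu hfin x, (s x y : K) * (v y : K) * (v x : K) * f y := by
  rw [Dop]
  exact finsum_mem_eq_finite_toFinset_sum _ (finite_up hfin x)

lemma Uop_apply (f : P → K) (x : P) :
    Uop K s f x = ∑ z ∈ Cd hfin x, (s z x : K) * f z := by
  rw [Uop]
  exact finsum_mem_eq_finite_toFinset_sum _ (finite_down hfin x)

noncomputable def DL : Module.End K (P → K) where
  toFun := Dop K s v
  map_add' f g := funext fun x => by
    simp only [Dop_apply K s v hfin, Pi.add_apply, mul_add, Finset.sum_add_distrib]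
  map_smul' c f := funext fun x => by
    simp only [Dop_apply K s v hfin, Pi.smul_apply, smul_eq_mul, RingHom.id_apply,
      Finset.mul_sum]
    exact Finset.sum_congr rfl fun y _ => by ring

noncomputable def UL : Module.End K (P → K) where
  toFun := Uop K s
  map_add' f g := funext fun x => by
    simp only [Uop_apply K s hfin, Pi.add_apply, mul_add, Finset.sum_add_distrib]
  map_smul' c f := funext fun x => by
    simp only [Uop_apply K s hfin, Pi.smul_apply, smul_eq_mul, RingHom.id_apply,
      Finset.mul_sum]
    exact Finset.sum_congr rfl fun y _ => by ring

@[simp] lemma DL_apply (f : P → K) : DL K s v hfin f = Dop K s v f := rfl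
@[simp] lemma UL_apply (f : P → K) : UL K s hfin f = Uop K s f := rfl

section Ops

variable (hw : ∀ f : P → K, Uop K s (Dop K s v f) + Dop K s v (Uop K s f) = f)
include hw

lemma hUDDU : UL K s hfin * DL K s v hfin + DL K s v hfin * UL K s hfin = 1 :=
  LinearMap.ext fun f => by
    simpa [Module.End.mul_apply, LinearMap.add_apply, Module.End.one_apply] using hw f

lemma hDU : DL K s v hfin * UL K s hfin = 1 - UL K s hfin * DL K s v hfin :=
  eq_sub_of_add_eq' (hUDDU K s v hfin hw)

lemma hDU_apply (f : P → K) :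
    Dop K s v (Uop K s f) = f - Uop K s (Dop K s v f) := by
  have := congrArg (fun T : Module.End K (P → K) => T f) (hDU K s v hfin hw)
  simpa [Module.End.mul_apply] using this

lemma commUUD : Commute (DL K s v hfin) (UL K s hfin ^ 2) := by
  unfold Commute SemiconjBy
  set D := DL K s v hfin
  set U := UL K s hfin
  have h := hDU K s v hfin hw
  rw [pow_two, ← mul_assoc, h, sub_mul, one_mul, mul_assoc, h, mul_sub, mul_one,
    sub_sub_cancel, ← mul_assoc, ← pow_two]

lemma commUUD_pow (k : ℕ) : Commute (DL K s v hfin ^ k) (UL K s hfin ^ 2) :=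
  (commUUD K s v hfin hw).pow_left k

end Ops

lemma D_ind (m : ℤ) (x : P) :
    Dop K s v (rankIndicator K m) x =
      if (grade ℕ x : ℤ) + 1 = m then Dop K s v (fun _ => 1) x else 0 := by
  by_cases h : (grade ℕ x : ℤ) + 1 = m
  · rw [if_pos h, Dop_apply K s v hfin, Dop_apply K s v hfin]
    refine Finset.sum_congr rfl fun y hy => ?_
    have hg := grade_covby ((mem_Cu hfin).mp hy)
    have : rankIndicator K m y = 1 := by
      rw [rankIndicator, if_pos]; omega
    rw [this]
  · rw [if_neg h, Dop_apply K s v hfin]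
    refine Finset.sum_eq_zero fun y hy => ?_
    have hg := grade_covby ((mem_Cu hfin).mp hy)
    have : rankIndicator K m y = 0 := by
      rw [rankIndicator, if_neg]; omega
    rw [this, mul_zero]

lemma U_ind (m : ℤ) (x : P) :
    Uop K s (rankIndicator K m) x =
      if (grade ℕ x : ℤ) = m + 1 then Uop K s (fun _ => 1) x else 0 := by
  by_cases h : (grade ℕ x : ℤ) = m + 1
  · rw [if_pos h, Uop_apply K s hfin, Uop_apply K s hfin]
    refine Finset.sum_congr rfl fun z hz => ?_
    have hg := grade_covby ((mem_Cd hfin).mp hz)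
    have : rankIndicator K m z = 1 := by
      rw [rankIndicator, if_pos]; omega
    rw [this]
  · rw [if_neg h, Uop_apply K s hfin]
    refine Finset.sum_eq_zero fun z hz => ?_
    have hg := grade_covby ((mem_Cd hfin).mp hz)
    have : rankIndicator K m z = 0 := by
      rw [rankIndicator, if_neg]; omega
    rw [this, mul_zero]

section Beta

variable (hw : ∀ f : P → K, Uop K s (Dop K s v f) + Dop K s v (Uop K s f) = f)
variable (hb : Dop K s v (fun _ => (1:K)) - Uop K s (fun _ => (1:K)) = fun _ => (1:K))

include hb in
lemma beta_ind (m : ℤ) :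
    Dop K s v (rankIndicator K m) =
      rankIndicator K (m-1) + Uop K s (rankIndicator K (m-2)) := by
  funext x
  have hbx : Dop K s v (fun _ => (1:K)) x - Uop K s (fun _ => (1:K)) x = 1 := by
    have := congrFun hb x
    simpa using this
  rw [Pi.add_apply, D_ind K s v hfin, U_ind K s hfin]
  by_cases h : (grade ℕ x : ℤ) = m - 1
  · rw [if_pos (by omega), if_pos (by omega : (grade ℕ x : ℤ) = (m-2) + 1)]
    have : rankIndicator K (m-1) x = 1 := by rw [rankIndicator, if_pos h]
    rw [this]
    linear_combination hbx
  · rw [if_neg (by omega), if_neg (by omega : ¬ (grade ℕ x : ℤ) = (m-2) + 1)]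
    have : rankIndicator K (m-1) x = 0 := by rw [rankIndicator, if_neg h]
    rw [this, add_zero]

include hw hb in
lemma D2_ind (m : ℤ) :
    (DL K s v hfin ^ 2) (rankIndicator K m) =
      (2:K) • rankIndicator K (m-2) - (UL K s hfin ^ 2) (rankIndicator K (m-4)) := by
  have e1 : m - 1 - 1 = m - 2 := by ring
  have e2 : m - 1 - 2 = m - 3 := by ring
  have e3 : m - 2 - 1 = m - 3 := by ring
  have e4 : m - 2 - 2 = m - 4 := by ring
  rw [pow_two, Module.End.mul_apply, DL_apply, DL_apply, beta_ind K s v hfin hb m]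
  have hDul : Dop K s v (Uop K s (rankIndicator K (m-2)))
      = rankIndicator K (m-2) - Uop K s (Dop K s v (rankIndicator K (m-2))) :=
    hDU_apply K s v hfin hw _
  calc Dop K s v (rankIndicator K (m-1) + Uop K s (rankIndicator K (m-2)))
      = Dop K s v (rankIndicator K (m-1)) + Dop K s v (Uop K s (rankIndicator K (m-2))) := by
        have := map_add (DL K s v hfin) (rankIndicator K (m-1)) (Uop K s (rankIndicator K (m-2)))
        simpa using this
    _ = (rankIndicator K (m-2) + Uop K s (rankIndicator K (m-3)))
        + (rankIndicator K (m-2) - Uop K s (rankIndicator K (m-3) + Uop K s (rankIndicator K (m-4)))) := by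
        rw [beta_ind K s v hfin hb (m-1), e1, e2, hDul, beta_ind K s v hfin hb (m-2), e3, e4]
    _ = (2:K) • rankIndicator K (m-2) - (UL K s hfin ^ 2) (rankIndicator K (m-4)) := by
        have := map_add (UL K s hfin) (rankIndicator K (m-3)) (Uop K s (rankIndicator K (m-4)))
        simp only [UL_apply] at this
        rw [this, pow_two, Module.End.mul_apply, UL_apply, UL_apply, two_smul]
        abel

include hw hb in
lemma Dk_ind (k : ℕ) (m : ℤ) :
    (DL K s v hfin ^ (2*k+2)) (rankIndicator K m) =
      (2:K) • (DL K s v hfin ^ (2*k)) (rankIndicator K (m-2))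
        - (UL K s hfin ^ 2) ((DL K s v hfin ^ (2*k)) (rankIndicator K (m-4))) := by
  have e : DL K s v hfin ^ (2*k+2) = DL K s v hfin ^ (2*k) * DL K s v hfin ^ 2 := by
    rw [← pow_add]
  rw [e, Module.End.mul_apply, D2_ind K s v hfin hw hb m, map_sub, map_smul]
  congr 1
  have hc := commUUD_pow K s v hfin hw (2*k)
  have := congrArg (fun T : Module.End K (P → K) => T (rankIndicator K (m-4))) hc.eq
  simpa [Module.End.mul_apply] using this

end Beta

noncomputable def Bp (m : ℤ) (f g : P → K) : K :=
  ∑ x ∈ F hfin m, (v x : K) * f x * g x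

lemma Bp_comm (m : ℤ) (f g : P → K) :
    Bp K v hfin m f g = Bp K v hfin m g f :=
  Finset.sum_congr rfl fun x _ => by ring

lemma Bp_sub_right (m : ℤ) (f g1 g2 : P → K) :
    Bp K v hfin m f (g1 - g2) = Bp K v hfin m f g1 - Bp K v hfin m f g2 := by
  simp only [Bp, Pi.sub_apply, mul_sub, Finset.sum_sub_distrib]

lemma Bp_smul_right (m : ℤ) (c : K) (f g : P → K) :
    Bp K v hfin m f (c • g) = c * Bp K v hfin m f g := by
  simp only [Bp, Pi.smul_apply, smul_eq_mul, Finset.mul_sum]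
  exact Finset.sum_congr rfl fun x _ => by ring

lemma Bp_sub_left (m : ℤ) (f1 f2 g : P → K) :
    Bp K v hfin m (f1 - f2) g = Bp K v hfin m f1 g - Bp K v hfin m f2 g := by
  rw [Bp_comm, Bp_sub_right, Bp_comm K v hfin m g f1, Bp_comm K v hfin m g f2]

lemma Bp_smul_left (m : ℤ) (c : K) (f g : P → K) :
    Bp K v hfin m (c • f) g = c * Bp K v hfin m f g := by
  rw [Bp_comm, Bp_smul_right, Bp_comm]

lemma Bp_congr_right (m : ℤ) (f g g' : P → K)
    (h : ∀ x : P, (grade ℕ x : ℤ) = m → g x = g' x) :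
    Bp K v hfin m f g = Bp K v hfin m f g' :=
  Finset.sum_congr rfl fun x hx => by rw [h x ((mem_F hfin).mp hx)]

lemma Bp_ind_right (m : ℤ) (f : P → K) :
    Bp K v hfin m f (rankIndicator K m) = Bp K v hfin m f (fun _ => 1) :=
  Bp_congr_right K v hfin m f _ _ fun x hx => by rw [rankIndicator, if_pos hx]

section Adj

variable (hv : ∀ x : P, v x = 1 ∨ v x = -1)
include hv

lemma vsq (x : P) : (v x : K) * (v x : K) = 1 := by
  rcases hv x with h | h <;> rw [h] <;> norm_num

lemma ADJ (m : ℤ) (g h : P → K) :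
    Bp K v hfin m (Uop K s g) h = Bp K v hfin (m-1) g (Dop K s v h) := by
  unfold Bp
  rw [Finset.sum_congr rfl (fun x (_ : x ∈ F hfin m) =>
    show (v x : K) * Uop K s g x * h x
        = ∑ z ∈ Cd hfin x, ((s z x : K) * (v x : K) * g z * h x) by
      rw [Uop_apply K s hfin, Finset.mul_sum, Finset.sum_mul]
      exact Finset.sum_congr rfl fun z _ => by ring)]
  rw [Finset.sum_congr rfl (fun z (_ : z ∈ F hfin (m-1)) =>
    show (v z : K) * g z * Dop K s v h z
        = ∑ x ∈ Cu hfin z, ((s z x : K) * (v x : K) * g z * h x) by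
      rw [Dop_apply K s v hfin, Finset.mul_sum]
      refine Finset.sum_congr rfl fun x _ => ?_
      have hv2 := vsq K v hfin hv z
      linear_combination ((s z x : K) * (v x : K) * g z * h x) * hv2)]
  rw [Finset.sum_sigma', Finset.sum_sigma']
  refine Finset.sum_nbij' (fun p => ⟨p.2, p.1⟩) (fun q => ⟨q.2, q.1⟩) ?_ ?_ ?_ ?_ ?_
  · intro p hp
    rw [Finset.mem_sigma] at hp ⊢
    dsimp only
    obtain ⟨h1, h2⟩ := hp
    have hc := (mem_Cd hfin).mp h2
    have hgr := grade_covby hc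
    have h1' := (mem_F hfin).mp h1
    exact ⟨(mem_F hfin).mpr (by omega), (mem_Cu hfin).mpr hc⟩
  · intro q hq
    rw [Finset.mem_sigma] at hq ⊢
    dsimp only
    obtain ⟨h1, h2⟩ := hq
    have hc := (mem_Cu hfin).mp h2
    have hgr := grade_covby hc
    have h1' := (mem_F hfin).mp h1
    exact ⟨(mem_F hfin).mpr (by omega), (mem_Cd hfin).mpr hc⟩
  · intro p _; rfl
  · intro q _; rfl
  · intro p _; rfl

lemma ADJ2 (m : ℤ) (f h : P → K) :
    Bp K v hfin m f (Uop K s h) = Bp K v hfin (m-1) (Dop K s v f) h := by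
  rw [Bp_comm, ADJ K s v hfin hv, Bp_comm]

end Adj

lemma tau_eq (k : ℕ) (n : ℤ) :
    tau K s v k n
      = Bp K v hfin n ((DL K s v hfin ^ k) (rankIndicator K (n + k))) (fun _ => 1) := by
  rw [tau, finsum_mem_eq_finite_toFinset_sum _ (finite_rankZ hfin n)]
  refine Finset.sum_congr rfl fun x hx => ?_
  rw [mul_one, Module.End.pow_apply]
  rfl

lemma F_neg {m : ℤ} (h : m < 0) : F hfin m = ∅ := by
  ext x
  simp only [Finset.notMem_empty, iff_false, mem_F hfin]
  omega

lemma tau_neg (k : ℕ) {n : ℤ} (h : n < 0) : tau K s v k n = 0 := by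
  rw [tau_eq K s v hfin, Bp, F_neg hfin h, Finset.sum_empty]

section Recur

variable (hv : ∀ x : P, v x = 1 ∨ v x = -1)
variable (hw : ∀ f : P → K, Uop K s (Dop K s v f) + Dop K s v (Uop K s f) = f)
variable (hb : Dop K s v (fun _ => (1:K)) - Uop K s (fun _ => (1:K)) = fun _ => (1:K))
include hv hw hb

lemma recur1 (l : ℕ) (n : ℤ) :
    tau K s v (2*l+2) n
      = 2 * tau K s v (2*l) n - 2 * tau K s v (2*l) (n-2) + tau K s v (2*l+2) (n-4) := by
  have hDD : ∀ f : P → K,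
      Dop K s v (Dop K s v ((DL K s v hfin ^ (2*l)) f)) = (DL K s v hfin ^ (2*l+2)) f := by
    intro f
    have e : DL K s v hfin ^ (2*l+2)
        = DL K s v hfin * (DL K s v hfin * DL K s v hfin ^ (2*l)) := by
      rw [← pow_succ', ← pow_succ']
    rw [e, Module.End.mul_apply, Module.End.mul_apply, DL_apply, DL_apply]
  have e0 : n + ((2*l+2 : ℕ) : ℤ) - 2 = n + ((2*l : ℕ) : ℤ) := by push_cast; ring
  have e0' : n + ((2*l+2 : ℕ) : ℤ) - 4 = n + ((2*l : ℕ) : ℤ) - 2 := by push_cast; ring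
  have key : Bp K v hfin n
        ((UL K s hfin ^ 2) ((DL K s v hfin ^ (2*l)) (rankIndicator K (n + ((2*l:ℕ):ℤ) - 2))))
        (fun _ => 1)
      = 2 * tau K s v (2*l) (n-2) - tau K s v (2*l+2) (n-4) := by
    set g := (DL K s v hfin ^ (2*l)) (rankIndicator K (n + ((2*l:ℕ):ℤ) - 2)) with hg
    have hUUg : (UL K s hfin ^ 2) g = Uop K s (Uop K s g) := by
      rw [pow_two, Module.End.mul_apply]; rfl
    rw [hUUg, ADJ K s v hfin hv, ADJ K s v hfin hv]
    have e1 : n - 1 - 1 = n - 2 := by ring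
    rw [e1]
    have hcong : Bp K v hfin (n-2) g (Dop K s v (Dop K s v (fun _ => 1)))
        = Bp K v hfin (n-2) g ((DL K s v hfin ^ 2) (rankIndicator K n)) := by
      refine Bp_congr_right K v hfin (n-2) g _ _ fun x hx => ?_
      rw [pow_two, Module.End.mul_apply, DL_apply, DL_apply,
        Dop_apply K s v hfin, Dop_apply K s v hfin]
      refine Finset.sum_congr rfl fun y hy => ?_
      have hgy := grade_covby ((mem_Cu hfin).mp hy)
      congr 1
      rw [D_ind K s v hfin n y, if_pos (by omega)]
    rw [hcong, D2_ind K s v hfin hw hb n, Bp_sub_right, Bp_smul_right]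
    have t1 : Bp K v hfin (n-2) g (rankIndicator K (n-2)) = tau K s v (2*l) (n-2) := by
      rw [Bp_ind_right]
      have e2 : n + ((2*l:ℕ):ℤ) - 2 = (n-2) + ((2*l:ℕ):ℤ) := by ring
      rw [hg, e2, ← tau_eq K s v hfin]
    have t2 : Bp K v hfin (n-2) g ((UL K s hfin ^ 2) (rankIndicator K (n-4)))
        = tau K s v (2*l+2) (n-4) := by
      have hUU : (UL K s hfin ^ 2) (rankIndicator K (n-4))
          = Uop K s (Uop K s (rankIndicator K (n-4))) := by
        rw [pow_two, Module.End.mul_apply]; rfl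
      rw [hUU, ADJ2 K s v hfin hv, ADJ2 K s v hfin hv]
      have e3 : n - 2 - 1 - 1 = n - 4 := by ring
      rw [e3, Bp_ind_right, hg, hDD]
      have e4 : n + ((2*l:ℕ):ℤ) - 2 = (n-4) + ((2*l+2:ℕ):ℤ) := by push_cast; ring
      rw [e4, ← tau_eq K s v hfin]
    rw [t1, t2]
  rw [tau_eq K s v hfin (2*l+2) n, Dk_ind K s v hfin hw hb l (n + ((2*l+2:ℕ):ℤ)), e0, e0',
    Bp_sub_left, Bp_smul_left, ← tau_eq K s v hfin (2*l) n, key]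
  ring

lemma recur (l : ℕ) (n : ℤ) :
    tau K s v (2*l+2) n + tau K s v (2*l+2) (n-2) = 2 * tau K s v (2*l) n := by
  have key : ∀ N : ℕ, ∀ n : ℤ, n ≤ N →
      tau K s v (2*l+2) n + tau K s v (2*l+2) (n-2) = 2 * tau K s v (2*l) n := by
    intro N
    induction N with
    | zero =>
      intro n hn
      simp only [Nat.cast_zero] at hn
      rcases lt_or_eq_of_le hn with h | h
      · rw [tau_neg K s v hfin _ h, tau_neg K s v hfin _ (by omega : n - 2 < 0),
          tau_neg K s v hfin _ h]
        ring
      · subst h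
        have r := recur1 K s v hfin hv hw hb l 0
        rw [tau_neg K s v hfin (2*l) (by norm_num : (0:ℤ)-2 < 0),
          tau_neg K s v hfin (2*l+2) (by norm_num : (0:ℤ)-4 < 0)] at r
        rw [tau_neg K s v hfin (2*l+2) (by norm_num : (0:ℤ)-2 < 0)]
        linear_combination r
    | succ N ih =>
      intro n hn
      by_cases h : n ≤ N
      · exact ih n h
      · have r := recur1 K s v hfin hv hw hb l n
        have ih2 := ih (n-2) (by push_cast at hn ⊢; omega)
        have e : n-2-2 = n-4 := by ring
        rw [e] at ih2
        linear_combination r + ih2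
  exact key n.toNat n (Int.self_le_toNat n)

lemma tau_zero_eq (n : ℤ) : tau K s v 0 n = ∑ x ∈ F hfin n, (v x : K) := by
  rw [tau_eq K s v hfin 0 n, pow_zero, Module.End.one_apply]
  have e : n + ((0:ℕ):ℤ) = n := by push_cast; ring
  rw [e, Bp_comm, Bp_ind_right]
  unfold Bp
  exact Finset.sum_congr rfl fun x _ => by ring

lemma main_lemma (l : ℕ) (n : ℤ) :
    ∑ j ∈ Finset.range (l+1), (l.choose j : K) * tau K s v (2*l) (n - 2*(j:ℤ))
      = 2^l * tau K s v 0 n := by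
  induction l generalizing n with
  | zero => simp
  | succ l ih =>
    have h2 : 2*(l+1) = 2*l+2 := by ring
    calc ∑ j ∈ Finset.range (l+1+1), ((l+1).choose j : K) * tau K s v (2*(l+1)) (n - 2*(j:ℤ))
        = ∑ i ∈ Finset.range (l+2), ((l+1).choose i : K) * tau K s v (2*l+2) (n - 2*(i:ℤ)) := by
          rw [h2]
      _ = (∑ i ∈ Finset.range (l+1), (l.choose i : K) * tau K s v (2*l+2) (n - 2*(i:ℤ)))
          + ∑ i ∈ Finset.range (l+1), (l.choose i : K) * tau K s v (2*l+2) (n - 2*((i+1:ℕ):ℤ)) :=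
          Finset.sum_choose_succ_mul (fun i _ => tau K s v (2*l+2) (n - 2*(i:ℤ))) l
      _ = ∑ i ∈ Finset.range (l+1), (l.choose i : K) * (2 * tau K s v (2*l) (n - 2*(i:ℤ))) := by
          rw [← Finset.sum_add_distrib]
          refine Finset.sum_congr rfl fun j _ => ?_
          rw [← mul_add]
          congr 1
          have r := recur K s v hfin hv hw hb l (n - 2*(j:ℤ))
          have e : n - 2*(j:ℤ) - 2 = n - 2*((j+1:ℕ):ℤ) := by push_cast; ring
          rw [e] at r
          exact r
      _ = 2 * ∑ i ∈ Finset.range (l+1), (l.choose i : K) * tau K s v (2*l) (n - 2*(i:ℤ)) := by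
          rw [Finset.mul_sum]
          exact Finset.sum_congr rfl fun j _ => by ring
      _ = 2 * (2^l * tau K s v 0 n) := by rw [ih]
      _ = 2^(l+1) * tau K s v 0 n := by ring

end Recur

end SDP9

/-- in a β-signed differential poset, for all `l, n ≥ 0`:
`∑_{j=0}^{l} binom(l,j) τ_{2l, n−2j} = 2^l ∑_{x ∈ Pₙ} v(x)`. -/
theorem statement9 {P : Type*} [PartialOrder P] [OrderBot P] [GradeMinOrder ℕ P]
    (K : Type*) [Field K] [CharZero K]
    (s : P → P → ℤ) (v : P → ℤ)
    (hsp : SDP.IsSignedPoset s v)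
    (hbeta : SDP.BetaSignedDifferential K s v)
    (l n : ℕ) :
    (∑ j ∈ Finset.range (l + 1), (l.choose j : K) * SDP.tau K s v (2 * l) ((n : ℤ) - 2 * j))
      = 2 ^ l * ∑ᶠ x ∈ {x : P | grade ℕ x = n}, (v x : K) := by
  obtain ⟨hs, hv, hfin⟩ := hsp
  have hw : ∀ f : P → K, SDP.Uop K s (SDP.Dop K s v f) + SDP.Dop K s v (SDP.Uop K s f) = f :=
    hbeta.1.2
  have hb := hbeta.2
  have hmain := SDP9.main_lemma K s v hfin hv hw hb l (n : ℤ)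
  have hset : ∑ᶠ x ∈ {x : P | grade ℕ x = n}, (v x : K) = ∑ x ∈ SDP9.F hfin (n:ℤ), (v x : K) := by
    rw [finsum_mem_eq_finite_toFinset_sum _ (hfin n)]
    apply Finset.sum_congr _ (fun _ _ => rfl)
    ext x
    simp only [Set.Finite.mem_toFinset, Set.mem_setOf_eq, SDP9.mem_F, Nat.cast_inj]
  rw [hmain, SDP9.tau_zero_eq K s v hfin hv hw hb, hset]
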